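/- Let t be a positive integer, let H₁, …, H_t be finite groups, and let H be a subgroup of the direct product H₁ × ⋯ × H_t whose projection onto each factor H_i is surjective (a subdirect product). Let c be a positive real number such that k(N) < c for every index i and every normal subgroup N of H_i. Then k(H) < c^t. -/

import Mathlib

/-- The number of conjugacy classes of a group. -/
noncomputable def numConjClasses (X : Type*) [Group X] : ℕ := Nat.card (ConjClasses X)

open MulAction

lemma numConjClasses_congr {X : Type*} {Y : Type*} [Group X] [Group Y] (e : X ≃* Y) :
    Nat.card (ConjClasses X) = Nat.card (ConjClasses Y) := by
  refine Nat.card_congr (Quotient.congr e.toEquiv fun a b => ?_)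
  show IsConj a b ↔ IsConj (e a) (e b)
  constructor
  · exact fun h => e.toMonoidHom.map_isConj h
  · intro h
    have := e.symm.toMonoidHom.map_isConj h
    simpa using this


open MulAction

lemma card_orbits_le (α : Type*) (β : Type*) (γ : Type*) [Group α] [Finite α] [Finite β]
    [Finite γ] [MulAction α β] [MulAction α γ]
    (h : ∀ a : α, Nat.card (fixedBy β a) ≤ Nat.card (fixedBy γ a)) :
    Nat.card (Quotient (orbitRel α β)) ≤ Nat.card (Quotient (orbitRel α γ)) := by
  classical
  letI := Fintype.ofFinite α
  letI := Fintype.ofFinite β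
  letI := Fintype.ofFinite γ
  letI : ∀ a : α, Fintype (fixedBy β a) := fun a => Fintype.ofFinite _
  letI : ∀ a : α, Fintype (fixedBy γ a) := fun a => Fintype.ofFinite _
  letI : Fintype (Quotient (orbitRel α β)) := Fintype.ofFinite _
  letI : Fintype (Quotient (orbitRel α γ)) := Fintype.ofFinite _
  have hb := MulAction.sum_card_fixedBy_eq_card_orbits_mul_card_group α β
  have hg := MulAction.sum_card_fixedBy_eq_card_orbits_mul_card_group α γ
  have key : Fintype.card (Quotient (orbitRel α β)) * Fintype.card α ≤
      Fintype.card (Quotient (orbitRel α γ)) * Fintype.card α := by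
    rw [← hb, ← hg]
    exact Finset.sum_le_sum fun a _ => by simpa [Nat.card_eq_fintype_card] using h a
  have := Nat.le_of_mul_le_mul_right key Fintype.card_pos
  simpa [Nat.card_eq_fintype_card] using this

lemma fiber_bound {G : Type*} [Group G] [Finite G] (N : Subgroup G) [N.Normal] (g : G) :
    Nat.card {d : ConjClasses G // ConjClasses.map (QuotientGroup.mk' N) d
      = ConjClasses.mk (QuotientGroup.mk' N g)} ≤ Nat.card (ConjClasses ↥N) := by
  classical
  set q := QuotientGroup.mk' N with hq
  let T := {x : G // q x = q g}
  let u : ConjAct ↥N → G := fun n => ((ConjAct.ofConjAct n : ↥N) : G)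
  have hu1 : u 1 = 1 := rfl
  have humul : ∀ m n, u (m * n) = u m * u n := fun m n => rfl
  have huinv : ∀ n, u n⁻¹ = (u n)⁻¹ := fun n => rfl
  have huq : ∀ n, q (u n) = 1 := fun n => (QuotientGroup.eq_one_iff _).2 (ConjAct.ofConjAct n).2
  letI : SMul (ConjAct ↥N) T := ⟨fun n x =>
    ⟨u n * x.1 * (u n)⁻¹, by
      show q _ = q g
      rw [map_mul, map_mul, map_inv, huq, x.2]
      group⟩⟩
  have smul_def' : ∀ (n : ConjAct ↥N) (x : T), (n • x).1 = u n * x.1 * (u n)⁻¹ := fun n x => rfl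
  letI : MulAction (ConjAct ↥N) T :=
    { one_smul := fun x => Subtype.ext (by rw [smul_def', hu1]; group)
      mul_smul := fun m n x => Subtype.ext (by
        rw [smul_def', smul_def', smul_def', humul, mul_inv_rev]; group) }
  -- fixed points comparison
  have hfix : ∀ n : ConjAct ↥N, Nat.card (fixedBy T n) ≤ Nat.card (fixedBy ↥N n) := by
    intro n
    rcases isEmpty_or_nonempty (fixedBy T n) with he | ⟨⟨m₀, hm₀⟩⟩
    · simp [Nat.card_of_isEmpty]
    · have hm₀' : u n * m₀.1 * (u n)⁻¹ = m₀.1 := by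
        have := congrArg Subtype.val hm₀
        rwa [smul_def'] at this
      have hmem : ∀ x : T, x ∈ fixedBy T n → (m₀.1⁻¹ * x.1 ∈ N) := by
        intro x _
        have : (m₀.1 : G ⧸ N) = (x.1 : G ⧸ N) := by
          have h1 : q m₀.1 = q g := m₀.2
          have h2 : q x.1 = q g := x.2
          show q m₀.1 = q x.1
          rw [h1, h2]
        exact QuotientGroup.eq.mp this
      let f : fixedBy T n → fixedBy ↥N n := fun x =>
        ⟨⟨m₀.1⁻¹ * x.1.1, hmem x.1 x.2⟩, by
          have hx : u n * x.1.1 * (u n)⁻¹ = x.1.1 := by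
            have := congrArg Subtype.val x.2
            rwa [smul_def'] at this
          show n • (⟨m₀.1⁻¹ * x.1.1, _⟩ : ↥N) = _
          rw [ConjAct.smul_def]
          ext
          show u n * (m₀.1⁻¹ * x.1.1) * (u n)⁻¹ = m₀.1⁻¹ * x.1.1
          have h3 : u n * m₀.1⁻¹ * (u n)⁻¹ = m₀.1⁻¹ := by
            have := congrArg (·⁻¹) hm₀'
            simpa [mul_inv_rev, mul_assoc] using this
          calc u n * (m₀.1⁻¹ * x.1.1) * (u n)⁻¹
              = (u n * m₀.1⁻¹ * (u n)⁻¹) * (u n * x.1.1 * (u n)⁻¹) := by group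
            _ = m₀.1⁻¹ * x.1.1 := by rw [h3, hx]⟩
      have hinj : Function.Injective f := by
        intro x y hxy
        have h' : m₀.1⁻¹ * x.1.1 = m₀.1⁻¹ * y.1.1 :=
          congrArg (fun z : ↑(fixedBy (↥N) n) => ((z : ↥N) : G)) hxy
        have : x.1.1 = y.1.1 := mul_left_cancel h' 
        exact Subtype.ext (Subtype.ext this)
      exact Nat.card_le_card_of_injective f hinj
  letI : Finite (ConjAct ↥N) := Finite.of_equiv ↥N ConjAct.toConjAct.toEquiv
  have h1 : Nat.card (Quotient (orbitRel (ConjAct ↥N) T)) ≤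
      Nat.card (Quotient (orbitRel (ConjAct ↥N) ↥N)) :=
    card_orbits_le _ _ _ hfix
  have h2 : Nat.card (Quotient (orbitRel (ConjAct ↥N) ↥N)) = Nat.card (ConjClasses ↥N) :=
    Nat.card_congr (Quotient.congrRight fun a b => by
      rw [show (orbitRel (ConjAct ↥N) ↥N) a b ↔ IsConj a b from
        Iff.of_eq (congrFun (congrFun ConjAct.orbitRel_conjAct a) b)]
      rfl)
  -- surjection from orbit quotient of T onto the fiber
  have hwd : ∀ x y : T, (orbitRel (ConjAct ↥N) T) x y →
      ConjClasses.mk x.1 = ConjClasses.mk y.1 := by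
    intro x y hxy
    obtain ⟨n, rfl⟩ := hxy
    rw [ConjClasses.mk_eq_mk_iff_isConj]
    show IsConj (n • y).1 y.1
    rw [smul_def']
    exact isConj_iff.2 ⟨(u n)⁻¹, by group⟩
  let s : Quotient (orbitRel (ConjAct ↥N) T) →
      {d : ConjClasses G // ConjClasses.map q d = ConjClasses.mk (q g)} :=
    Quotient.lift (fun x : T => ⟨ConjClasses.mk x.1, by
      show ConjClasses.map q (ConjClasses.mk x.1) = _
      have : ConjClasses.map q (ConjClasses.mk x.1) = ConjClasses.mk (q x.1) := rfl
      rw [this, x.2]⟩)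
      (fun x y hxy => Subtype.ext (hwd x y hxy))
  have hs : Function.Surjective s := by
    rintro ⟨d, hd⟩
    obtain ⟨y, rfl⟩ := ConjClasses.exists_rep d
    have : ConjClasses.mk (q y) = ConjClasses.mk (q g) := hd
    rw [ConjClasses.mk_eq_mk_iff_isConj] at this
    obtain ⟨zb, hz⟩ := isConj_iff.1 this
    obtain ⟨z, rfl⟩ := QuotientGroup.mk'_surjective N zb
    have hx : q (z * y * z⁻¹) = q g := by
      rw [map_mul, map_mul, map_inv]; exact hz
    refine ⟨Quotient.mk _ (⟨z * y * z⁻¹, hx⟩ : T), ?_⟩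
    refine Subtype.ext ?_
    show ConjClasses.mk (z * y * z⁻¹) = ConjClasses.mk y
    rw [ConjClasses.mk_eq_mk_iff_isConj]
    exact isConj_iff.2 ⟨z⁻¹, by group⟩
  have h0 : Nat.card {d : ConjClasses G // ConjClasses.map q d = ConjClasses.mk (q g)} ≤
      Nat.card (Quotient (orbitRel (ConjAct ↥N) T)) :=
    Nat.card_le_card_of_surjective s hs
  omega

lemma nat_card_sigma {ι : Type*} [Fintype ι] (f : ι → Type*) [∀ i, Finite (f i)] :
    Nat.card ((i : ι) × f i) = ∑ i, Nat.card (f i) := by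
  classical
  letI := fun i => Fintype.ofFinite (f i)
  simp [Nat.card_eq_fintype_card]

lemma nagao {G : Type*} [Group G] [Finite G] (N : Subgroup G) [N.Normal] :
    Nat.card (ConjClasses G) ≤ Nat.card (ConjClasses ↥N) * Nat.card (ConjClasses (G ⧸ N)) := by
  classical
  set φ := ConjClasses.map (QuotientGroup.mk' N) with hφ
  letI : Fintype (ConjClasses (G ⧸ N)) := Fintype.ofFinite _
  have h1 : Nat.card (ConjClasses G) = ∑ d : ConjClasses (G ⧸ N), Nat.card {x // φ x = d} := by
    rw [← nat_card_sigma]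
    exact (Nat.card_congr (Equiv.sigmaFiberEquiv φ)).symm
  have h2 : ∀ d : ConjClasses (G ⧸ N), Nat.card {x // φ x = d} ≤ Nat.card (ConjClasses ↥N) := by
    intro d
    obtain ⟨gb, rfl⟩ := ConjClasses.exists_rep d
    obtain ⟨g, rfl⟩ := QuotientGroup.mk'_surjective N gb
    exact fiber_bound N g
  calc Nat.card (ConjClasses G) = ∑ d : ConjClasses (G ⧸ N), Nat.card {x // φ x = d} := h1
    _ ≤ ∑ _d : ConjClasses (G ⧸ N), Nat.card (ConjClasses ↥N) :=
        Finset.sum_le_sum fun d _ => h2 d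
    _ = Nat.card (ConjClasses (G ⧸ N)) * Nat.card (ConjClasses ↥N) := by
        rw [Finset.sum_const, Finset.card_univ, smul_eq_mul, Nat.card_eq_fintype_card (α := ConjClasses (G ⧸ N))]
    _ = Nat.card (ConjClasses ↥N) * Nat.card (ConjClasses (G ⧸ N)) := Nat.mul_comm _ _

universe u

lemma step_lemma {c : ℝ} (hc : 0 < c) (n : ℕ) (H : Fin (n + 1) → Type u)
    [∀ i, Group (H i)] [∀ i, Finite (H i)] (P : Subgroup (∀ i, H i))
    (hproj : ∀ i, Function.Surjective fun h : P => (h : ∀ j, H j) i)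
    (hk : ∀ i (N : Subgroup (H i)), N.Normal → ((Nat.card (ConjClasses ↥N) : ℝ)) < c)
    (hQ : ∀ (Q : Subgroup (∀ i : Fin n, H i.castSucc)),
        (∀ i : Fin n, Function.Surjective fun h : Q => (h : ∀ j : Fin n, H j.castSucc) i) →
        ((Nat.card (ConjClasses ↥Q) : ℝ)) ≤ c ^ n) :
    ((Nat.card (ConjClasses ↥P) : ℝ)) < c ^ (n + 1) := by
  classical
  let ρ : ↥P →* ∀ i : Fin n, H i.castSucc :=
    Pi.monoidHom fun i => (Pi.evalMonoidHom H i.castSucc).comp P.subtype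
  have hnagao := nagao ρ.ker
  have hquot : Nat.card (ConjClasses (↥P ⧸ ρ.ker)) = Nat.card (ConjClasses ↥ρ.range) :=
    numConjClasses_congr (QuotientGroup.quotientKerEquivRange ρ)
  have hrange_proj : ∀ i : Fin n,
      Function.Surjective fun h : ρ.range => (h : ∀ j : Fin n, H j.castSucc) i := by
    intro i a
    obtain ⟨p, hp⟩ := hproj i.castSucc a
    exact ⟨⟨ρ p, ⟨p, rfl⟩⟩, hp⟩
  have hQr : (Nat.card (ConjClasses ↥ρ.range) : ℝ) ≤ c ^ n := hQ ρ.range hrange_proj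
  let ι : ↥ρ.ker →* H (Fin.last n) :=
    ((Pi.evalMonoidHom H (Fin.last n)).comp P.subtype).comp ρ.ker.subtype
  have hι : Function.Injective ι := by
    rw [injective_iff_map_eq_one]
    intro x hx
    have hker : ∀ i : Fin n, (x.1.1 : ∀ j, H j) i.castSucc = 1 := by
      intro i
      have h2 := x.2
      rw [MonoidHom.mem_ker] at h2
      exact congrFun h2 i
    have hone : (x.1.1 : ∀ j, H j) = 1 := by
      funext j
      refine Fin.lastCases ?_ ?_ j
      · exact hx
      · exact hker
    exact Subtype.ext (Subtype.ext hone)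
  have hnormal : ι.range.Normal := by
    constructor
    intro a ha b
    obtain ⟨x, rfl⟩ := ha
    obtain ⟨p, hp⟩ := hproj (Fin.last n) b
    have hymem : p * x.1 * p⁻¹ ∈ ρ.ker := by
      rw [MonoidHom.mem_ker, map_mul, map_mul, map_inv,
        show ρ x.1 = 1 from x.2]
      group
    refine ⟨⟨p * x.1 * p⁻¹, hymem⟩, ?_⟩
    show ((p * x.1 * p⁻¹ : ↥P) : ∀ j, H j) (Fin.last n) = b * ι x * b⁻¹
    have : ((p * x.1 * p⁻¹ : ↥P) : ∀ j, H j) (Fin.last n)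
        = (p : ∀ j, H j) (Fin.last n) * (x.1 : ∀ j, H j) (Fin.last n)
          * ((p : ∀ j, H j) (Fin.last n))⁻¹ := rfl
    rw [this]
    rw [show (p : ∀ j, H j) (Fin.last n) = b from hp]
    rfl
  have hKeq : Nat.card (ConjClasses ↥ρ.ker) = Nat.card (ConjClasses ↥ι.range) :=
    numConjClasses_congr (MonoidHom.ofInjective hι)
  have hKlt : (Nat.card (ConjClasses ↥ρ.ker) : ℝ) < c := by
    rw [hKeq]; exact hk (Fin.last n) ι.range hnormal
  have h0 : (Nat.card (ConjClasses ↥P) : ℝ) ≤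
      (Nat.card (ConjClasses ↥ρ.ker) : ℝ) * (Nat.card (ConjClasses ↥ρ.range) : ℝ) := by
    rw [← hquot]
    exact_mod_cast hnagao
  calc (Nat.card (ConjClasses ↥P) : ℝ)
      ≤ (Nat.card (ConjClasses ↥ρ.ker) : ℝ) * (Nat.card (ConjClasses ↥ρ.range) : ℝ) := h0
    _ ≤ (Nat.card (ConjClasses ↥ρ.ker) : ℝ) * c ^ n :=
        mul_le_mul_of_nonneg_left hQr (by positivity)
    _ < c * c ^ n := mul_lt_mul_of_pos_right hKlt (by positivity)
    _ = c ^ (n + 1) := by ring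


lemma aux_induction {c : ℝ} (hc : 0 < c) : ∀ (n : ℕ) (H : Fin (n + 1) → Type u)
    (_ : ∀ i, Group (H i)) (_ : ∀ i, Finite (H i)) (P : Subgroup (∀ i, H i))
    (_ : ∀ i, Function.Surjective fun h : P => (h : ∀ j, H j) i)
    (_ : ∀ i (N : Subgroup (H i)), N.Normal → ((Nat.card (ConjClasses ↥N) : ℝ)) < c),
    ((Nat.card (ConjClasses ↥P) : ℝ)) < c ^ (n + 1) := by
  intro n
  induction n with
  | zero =>
    intro H _ _ P hproj hk
    refine step_lemma hc 0 H P hproj hk ?_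
    intro Q _
    have hsub : Subsingleton (∀ i : Fin 0, H i.castSucc) :=
      ⟨fun a b => funext fun i => i.elim0⟩
    have hQ1 : Nat.card (ConjClasses ↥Q) = 1 := by
      haveI : Subsingleton ↥Q := ⟨fun a b => Subtype.ext (hsub.allEq a.1 b.1)⟩
      haveI : Subsingleton (ConjClasses ↥Q) := ⟨fun a b => by
        obtain ⟨x, rfl⟩ := ConjClasses.exists_rep a
        obtain ⟨y, rfl⟩ := ConjClasses.exists_rep b
        rw [Subsingleton.elim x y]⟩
      exact Nat.card_eq_one_iff_unique.2 ⟨this, ⟨ConjClasses.mk 1⟩⟩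
    rw [hQ1]
    norm_num
  | succ m ih =>
    intro H _ _ P hproj hk
    refine step_lemma hc (m + 1) H P hproj hk ?_
    intro Q hQproj
    exact le_of_lt (ih (fun i => H i.castSucc) (fun i => inferInstance)
      (fun i => inferInstance) Q hQproj
      (fun i N hN => hk i.castSucc N hN))

/-- Let `H` be a subdirect product of finite groups `H₁, …, H_t` (`t ≥ 1`), i.e. a subgroup
of the direct product projecting onto each factor. If `c > 0` is such that `k(N) < c` for
every normal subgroup `N` of every `H_i`, then `k(H) < c^t`. -/
theorem numConjClasses_subdirectProduct_lt
    (t : ℕ) (ht : 0 < t) (H : Fin t → Type*) [∀ i, Group (H i)] [∀ i, Finite (H i)]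
    (P : Subgroup (∀ i, H i))
    (hproj : ∀ i : Fin t, Function.Surjective fun h : P => (h : ∀ j, H j) i)
    (c : ℝ) (hc : 0 < c)
    (hk : ∀ (i : Fin t) (N : Subgroup (H i)), N.Normal → (numConjClasses N : ℝ) < c) :
    (numConjClasses P : ℝ) < c ^ t := by
  obtain ⟨n, rfl⟩ : ∃ n, t = n + 1 := ⟨t - 1, by omega⟩
  simp only [numConjClasses] at hk ⊢
  exact aux_induction hc n H inferInstance inferInstance P hproj hk
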